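/- arXiv:1607.02684 — 3 statements merged into one kernel-verified Lean document; each statement's English description precedes it below -/
import Mathlib

section
/- The map h₃ : U(1) × SU(3) × SU(3) → S(U(3) × U(3)) given by h₃(θ, A, B) = diag(θA, θ⁻¹B) is a surjective group homomorphism whose kernel is {(1,E,E), (ω, ω²E, ωE), (ω², ωE, ω²E)} where ω is a primitive cube root of unity; hence S(U(3) × U(3)) ≅ (U(1) × SU(3) × SU(3))/Z₃. -/
set_option maxRecDepth 100000


open Matrix

/-- `h₃(θ, A, B) = diag(θA, θ⁻¹B)` as a `6×6` complex matrix (blocks indexed by `Fin 3 ⊕ Fin 3`). -/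
noncomputable def h₃ (θ : ℂ) (A B : Matrix (Fin 3) (Fin 3) ℂ) :
    Matrix (Fin 3 ⊕ Fin 3) (Fin 3 ⊕ Fin 3) ℂ :=
  fromBlocks (θ • A) 0 0 (θ⁻¹ • B)

/-- `S(U(3) × U(3))`: block-diagonal matrices `diag(C, D)` with `C, D ∈ U(3)`, inside `SU(6)`. -/
def SU3xU3 : Set (Matrix (Fin 3 ⊕ Fin 3) (Fin 3 ⊕ Fin 3) ℂ) :=
  {M | M ∈ Matrix.specialUnitaryGroup (Fin 3 ⊕ Fin 3) ℂ ∧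
    ∃ C D : Matrix (Fin 3) (Fin 3) ℂ, C ∈ Matrix.unitaryGroup (Fin 3) ℂ ∧
      D ∈ Matrix.unitaryGroup (Fin 3) ℂ ∧ M = fromBlocks C 0 0 D}

lemma mulconj_one {c : ℂ} (hc : ‖c‖ = 1) : c * star c = 1 := by
  rw [Complex.star_def, Complex.mul_conj]
  norm_cast
  rw [Complex.normSq_eq_norm_sq, hc]; norm_num

lemma smul_mem_unitaryGroup {c : ℂ} (hc : ‖c‖ = 1) {A : Matrix (Fin 3) (Fin 3) ℂ}
    (hA : A ∈ Matrix.unitaryGroup (Fin 3) ℂ) : c • A ∈ Matrix.unitaryGroup (Fin 3) ℂ := by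
  rw [Matrix.mem_unitaryGroup_iff] at hA ⊢
  calc c • A * star (c • A) = (c * star c) • (A * star A) := by
        rw [star_smul, smul_mul_smul_comm]
    _ = 1 := by rw [hA, mulconj_one hc, one_smul]

lemma norm_one_ne_zero {c : ℂ} (hc : ‖c‖ = 1) : c ≠ 0 := by
  intro h; rw [h] at hc; simp at hc

lemma norm_inv_one {c : ℂ} (hc : ‖c‖ = 1) : ‖c⁻¹‖ = 1 := by
  rw [norm_inv, hc]; norm_num

lemma det_smul3 (c : ℂ) (A : Matrix (Fin 3) (Fin 3) ℂ) : (c • A).det = c ^ 3 * A.det := by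
  rw [Matrix.det_smul]; norm_num

lemma norm_of_unitary {z : ℂ} (h : z ∈ unitary ℂ) : ‖z‖ = 1 := by
  have h2 : (Complex.normSq z : ℂ) = 1 := by
    rw [← Complex.mul_conj, ← Complex.star_def]; exact h.2
  have h3 : Complex.normSq z = 1 := by exact_mod_cast h2
  rw [Complex.norm_def, h3, Real.sqrt_one]

lemma fromBlocks_mem_unitary {C D : Matrix (Fin 3) (Fin 3) ℂ}
    (hC : C ∈ Matrix.unitaryGroup (Fin 3) ℂ) (hD : D ∈ Matrix.unitaryGroup (Fin 3) ℂ) :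
    fromBlocks C 0 0 D ∈ Matrix.unitaryGroup (Fin 3 ⊕ Fin 3) ℂ := by
  rw [Matrix.mem_unitaryGroup_iff] at hC hD ⊢
  rw [Matrix.star_eq_conjTranspose, Matrix.fromBlocks_conjTranspose]
  rw [Matrix.fromBlocks_multiply]
  simp [← Matrix.star_eq_conjTranspose, hC, hD, Matrix.fromBlocks_one]

lemma cube_roots {ω θ : ℂ} (hω3 : ω ^ 3 = 1) (hω1 : ω ≠ 1) (hθ3 : θ ^ 3 = 1) :
    θ = 1 ∨ θ = ω ∨ θ = ω ^ 2 := by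
  have hq : ω ^ 2 + ω + 1 = 0 := by
    have h : (ω - 1) * (ω ^ 2 + ω + 1) = 0 := by linear_combination hω3
    rcases mul_eq_zero.mp h with h | h
    · exact absurd (sub_eq_zero.mp h) hω1
    · exact h
  have key : (θ - 1) * ((θ - ω) * (θ - ω ^ 2)) = 0 := by
    linear_combination hθ3 + (θ - 1) * hω3 + (θ - θ ^ 2) * hq
  rcases mul_eq_zero.mp key with h | h
  · exact Or.inl (by linear_combination h)
  · rcases mul_eq_zero.mp h with h | h
    · exact Or.inr (Or.inl (by linear_combination h))
    · exact Or.inr (Or.inr (by linear_combination h))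

lemma ker2 {c : ℂ} (hc : c ^ 3 = 1) :
    h₃ c (c ^ 2 • (1 : Matrix (Fin 3) (Fin 3) ℂ)) (c • (1 : Matrix (Fin 3) (Fin 3) ℂ)) = 1 := by
  have hc0 : c ≠ 0 := by intro h; rw [h] at hc; simp at hc
  rw [h₃, smul_smul, smul_smul, inv_mul_cancel₀ hc0,
    show c * c ^ 2 = c ^ 3 by ring, hc, one_smul, Matrix.fromBlocks_one]

lemma ker3 {c : ℂ} (hc : c ^ 3 = 1) :
    h₃ (c ^ 2) (c • (1 : Matrix (Fin 3) (Fin 3) ℂ)) (c ^ 2 • (1 : Matrix (Fin 3) (Fin 3) ℂ)) = 1 := by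
  have hc0 : c ≠ 0 := by intro h; rw [h] at hc; simp at hc
  rw [h₃, smul_smul, smul_smul, inv_mul_cancel₀ (pow_ne_zero 2 hc0),
    show c ^ 2 * c = c ^ 3 by ring, hc, one_smul, Matrix.fromBlocks_one]

/-- `h₃ : U(1) × SU(3) × SU(3) → S(U(3) × U(3))` is a surjective group homomorphism with
kernel `{(1,E,E), (ω, ω²E, ωE), (ω², ωE, ω²E)}` for `ω` a primitive cube root of unity. -/
theorem stmt0 :
    (∀ (θ θ' : ℂ) (A A' B B' : Matrix (Fin 3) (Fin 3) ℂ),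
        h₃ (θ * θ') (A * A') (B * B') = h₃ θ A B * h₃ θ' A' B') ∧
    (∀ (θ : ℂ) (A B : Matrix (Fin 3) (Fin 3) ℂ), ‖θ‖ = 1 →
        A ∈ Matrix.specialUnitaryGroup (Fin 3) ℂ →
        B ∈ Matrix.specialUnitaryGroup (Fin 3) ℂ → h₃ θ A B ∈ SU3xU3) ∧
    (∀ M ∈ SU3xU3, ∃ (θ : ℂ) (A B : Matrix (Fin 3) (Fin 3) ℂ), ‖θ‖ = 1 ∧
        A ∈ Matrix.specialUnitaryGroup (Fin 3) ℂ ∧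
        B ∈ Matrix.specialUnitaryGroup (Fin 3) ℂ ∧ h₃ θ A B = M) ∧
    (∀ ω : ℂ, ω ^ 3 = 1 → ω ≠ 1 →
      ∀ (θ : ℂ) (A B : Matrix (Fin 3) (Fin 3) ℂ), ‖θ‖ = 1 →
        A ∈ Matrix.specialUnitaryGroup (Fin 3) ℂ →
        B ∈ Matrix.specialUnitaryGroup (Fin 3) ℂ →
        (h₃ θ A B = 1 ↔
          (θ = 1 ∧ A = 1 ∧ B = 1) ∨
          (θ = ω ∧ A = ω ^ 2 • (1 : Matrix (Fin 3) (Fin 3) ℂ) ∧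
            B = ω • (1 : Matrix (Fin 3) (Fin 3) ℂ)) ∨
          (θ = ω ^ 2 ∧ A = ω • (1 : Matrix (Fin 3) (Fin 3) ℂ) ∧
            B = ω ^ 2 • (1 : Matrix (Fin 3) (Fin 3) ℂ)))) := by
  refine ⟨?_, ?_, ?_, ?_⟩
  · -- homomorphism
    intro θ θ' A A' B B'
    have e1 : (θ * θ') • (A * A') = (θ • A) * (θ' • A') := (smul_mul_smul_comm θ A θ' A').symm
    have e2 : (θ * θ')⁻¹ • (B * B') = (θ⁻¹ • B) * (θ'⁻¹ • B') := by
      rw [mul_inv]; exact (smul_mul_smul_comm θ⁻¹ B θ'⁻¹ B').symm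
    rw [h₃, h₃, h₃, Matrix.fromBlocks_multiply]
    simp [e1, e2, smul_smul]
  · -- maps into SU3xU3
    intro θ A B hθ hA hB
    rw [Matrix.mem_specialUnitaryGroup_iff] at hA hB
    have hθ' := norm_inv_one hθ
    have hθA := smul_mem_unitaryGroup hθ hA.1
    have hθB := smul_mem_unitaryGroup hθ' hB.1
    have hθ0 := norm_one_ne_zero hθ
    refine ⟨⟨fromBlocks_mem_unitary hθA hθB, ?_⟩, θ • A, θ⁻¹ • B, hθA, hθB, rfl⟩
    show (h₃ θ A B).det = 1
    rw [h₃, Matrix.det_fromBlocks_zero₂₁, det_smul3, det_smul3, hA.2, hB.2,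
      mul_one, mul_one, inv_pow, mul_inv_cancel₀ (pow_ne_zero 3 hθ0)]
  · -- surjective
    rintro M ⟨hSU, C, D, hC, hD, rfl⟩
    rw [Matrix.mem_specialUnitaryGroup_iff] at hSU
    have hdet : C.det * D.det = 1 := by
      rw [← Matrix.det_fromBlocks_zero₂₁ C 0 D]; exact hSU.2
    obtain ⟨θ, hθ3⟩ := IsAlgClosed.exists_pow_nat_eq C.det (n := 3) (by norm_num)
    have hnormC : ‖C.det‖ = 1 := norm_of_unitary (Matrix.det_of_mem_unitary hC)
    have hθ : ‖θ‖ = 1 := by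
      have h3 : ‖θ‖ ^ 3 = 1 := by rw [← norm_pow, hθ3, hnormC]
      nlinarith [norm_nonneg θ, sq_nonneg (‖θ‖ - 1), sq_nonneg (‖θ‖ + 1)]
    have hθ0 := norm_one_ne_zero hθ
    refine ⟨θ, θ⁻¹ • C, θ • D, hθ, ?_, ?_, ?_⟩
    · rw [Matrix.mem_specialUnitaryGroup_iff]
      refine ⟨smul_mem_unitaryGroup (norm_inv_one hθ) hC, ?_⟩
      rw [det_smul3, ← hθ3, inv_pow, inv_mul_cancel₀ (pow_ne_zero 3 hθ0)]
    · rw [Matrix.mem_specialUnitaryGroup_iff]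
      refine ⟨smul_mem_unitaryGroup hθ hD, ?_⟩
      rw [det_smul3, hθ3, hdet]
    · rw [h₃, smul_smul, smul_smul, mul_inv_cancel₀ hθ0, inv_mul_cancel₀ hθ0,
        one_smul, one_smul]
  · -- kernel
    intro ω hω3 hω1 θ A B hθ hA hB
    have hθ0 := norm_one_ne_zero hθ
    have hω0 : ω ≠ 0 := by intro h; rw [h] at hω3; simp at hω3
    rw [Matrix.mem_specialUnitaryGroup_iff] at hA hB
    constructor
    · intro h
      rw [h₃, ← Matrix.fromBlocks_one] at h
      obtain ⟨h1, -, -, h2⟩ := Matrix.fromBlocks_inj.mp h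
      have hAeq : A = θ⁻¹ • (1 : Matrix (Fin 3) (Fin 3) ℂ) := by
        rw [← h1, smul_smul, inv_mul_cancel₀ hθ0, one_smul]
      have hBeq : B = θ • (1 : Matrix (Fin 3) (Fin 3) ℂ) := by
        rw [← h2, smul_smul, mul_inv_cancel₀ hθ0, one_smul]
      have hθ3 : θ ^ 3 = 1 := by
        have := hA.2
        rw [hAeq, det_smul3, Matrix.det_one, mul_one, inv_pow] at this
        rw [← inv_inv (θ ^ 3), this, inv_one]
      have hωinv : ω⁻¹ = ω ^ 2 :=
        inv_eq_of_mul_eq_one_right (by linear_combination hω3)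
      have hω2inv : (ω ^ 2)⁻¹ = ω :=
        inv_eq_of_mul_eq_one_right (by linear_combination hω3)
      rcases cube_roots hω3 hω1 hθ3 with h | h | h
      · exact Or.inl ⟨h, by rw [hAeq, h, inv_one, one_smul], by rw [hBeq, h, one_smul]⟩
      · exact Or.inr (Or.inl ⟨h, by rw [hAeq, h, hωinv], by rw [hBeq, h]⟩)
      · exact Or.inr (Or.inr ⟨h, by rw [hAeq, h, hω2inv], by rw [hBeq, h]⟩)
    · rintro (⟨h1, h2, h3⟩ | ⟨h1, h2, h3⟩ | ⟨h1, h2, h3⟩) <;> rw [h1, h2, h3]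
      · simp [h₃, Matrix.fromBlocks_one]
      · exact ker2 hω3
      · exact ker3 hω3
end

section
/- The map h₅ : U(1) × SU(5) → S(U(1) × U(5)) given by h₅(θ, A) = diag(θ⁵, θ⁻¹A) is a surjective group homomorphism whose kernel is the cyclic group of order 5 consisting of elements (ν, νE) with ν⁵ = 1; hence S(U(1) × U(5)) ≅ (U(1) × SU(5))/Z₅. -/
open Matrix

lemma smul_one_unitary {n : Type*} [DecidableEq n] [Fintype n] (θ : ℂ) (h : ‖θ‖ = 1) :
    θ • (1 : Matrix n n ℂ) ∈ Matrix.unitaryGroup n ℂ := by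
  rw [Matrix.mem_unitaryGroup_iff]
  have : star (θ • (1 : Matrix n n ℂ)) = (starRingEnd ℂ θ) • (1 : Matrix n n ℂ) := by
    simp [Matrix.star_eq_conjTranspose, Matrix.conjTranspose_smul]
  rw [this, smul_mul_smul_comm, one_mul, Complex.mul_conj]
  have h2 : Complex.normSq θ = 1 := by rw [Complex.normSq_eq_norm_sq, h]; norm_num
  rw [h2]; norm_num

lemma fromBlocks_unitary {C : Matrix (Fin 1) (Fin 1) ℂ} {D : Matrix (Fin 5) (Fin 5) ℂ}
    (hC : C ∈ Matrix.unitaryGroup (Fin 1) ℂ) (hD : D ∈ Matrix.unitaryGroup (Fin 5) ℂ) :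
    fromBlocks C 0 0 D ∈ Matrix.unitaryGroup (Fin 1 ⊕ Fin 5) ℂ := by
  rw [Matrix.mem_unitaryGroup_iff] at *
  rw [Matrix.star_eq_conjTranspose, fromBlocks_conjTranspose, fromBlocks_multiply]
  simp only [Matrix.star_eq_conjTranspose] at hC hD
  simp [hC, hD, Matrix.fromBlocks_one]

lemma norm_eq_one_of_pow5 {x : ℂ} {ζ : ℂ} (h : x ^ 5 = ζ) (hζ : ‖ζ‖ = 1) : ‖x‖ = 1 := by
  have h5 : ‖x‖ ^ 5 = 1 := by rw [← norm_pow, h, hζ]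
  nlinarith [norm_nonneg x, sq_nonneg (‖x‖ - 1), sq_nonneg (‖x‖ + 1), sq_nonneg (‖x‖^2 - 1), sq_nonneg (‖x‖^2 + ‖x‖)]


/-- `h₅(θ, A) = diag(θ⁵, θ⁻¹A)` as a `6×6` complex matrix (blocks indexed by `Fin 1 ⊕ Fin 5`). -/
noncomputable def h₅ (θ : ℂ) (A : Matrix (Fin 5) (Fin 5) ℂ) :
    Matrix (Fin 1 ⊕ Fin 5) (Fin 1 ⊕ Fin 5) ℂ :=
  fromBlocks (θ ^ 5 • (1 : Matrix (Fin 1) (Fin 1) ℂ)) 0 0 (θ⁻¹ • A)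

/-- `S(U(1) × U(5))`: block-diagonal matrices `diag(ζ, B)` with `ζ ∈ U(1)`, `B ∈ U(5)`,
inside `SU(6)`. -/
def SU1xU5 : Set (Matrix (Fin 1 ⊕ Fin 5) (Fin 1 ⊕ Fin 5) ℂ) :=
  {M | M ∈ Matrix.specialUnitaryGroup (Fin 1 ⊕ Fin 5) ℂ ∧
    ∃ (C : Matrix (Fin 1) (Fin 1) ℂ) (D : Matrix (Fin 5) (Fin 5) ℂ),
      C ∈ Matrix.unitaryGroup (Fin 1) ℂ ∧ D ∈ Matrix.unitaryGroup (Fin 5) ℂ ∧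
      M = fromBlocks C 0 0 D}

set_option maxRecDepth 8000

/-- `h₅ : U(1) × SU(5) → S(U(1) × U(5))` is a surjective group homomorphism whose kernel is
the cyclic group of order 5 consisting of the elements `(ν, νE)` with `ν⁵ = 1`. -/
theorem stmt3 :
    (∀ (θ θ' : ℂ) (A A' : Matrix (Fin 5) (Fin 5) ℂ),
        h₅ (θ * θ') (A * A') = h₅ θ A * h₅ θ' A') ∧
    (∀ (θ : ℂ) (A : Matrix (Fin 5) (Fin 5) ℂ), ‖θ‖ = 1 →
        A ∈ Matrix.specialUnitaryGroup (Fin 5) ℂ → h₅ θ A ∈ SU1xU5) ∧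
    (∀ M ∈ SU1xU5, ∃ (θ : ℂ) (A : Matrix (Fin 5) (Fin 5) ℂ), ‖θ‖ = 1 ∧
        A ∈ Matrix.specialUnitaryGroup (Fin 5) ℂ ∧ h₅ θ A = M) ∧
    (∀ (θ : ℂ) (A : Matrix (Fin 5) (Fin 5) ℂ), ‖θ‖ = 1 →
        A ∈ Matrix.specialUnitaryGroup (Fin 5) ℂ →
        (h₅ θ A = 1 ↔ θ ^ 5 = 1 ∧ A = θ • (1 : Matrix (Fin 5) (Fin 5) ℂ))) := by
  refine ⟨?_, ?_, ?_, ?_⟩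
  · intro θ θ' A A'
    simp only [h₅, fromBlocks_multiply, Matrix.mul_zero, Matrix.zero_mul, add_zero, zero_add,
      smul_mul_smul_comm, one_mul, mul_pow, mul_inv]
  · intro θ A hθ hA
    rw [Matrix.mem_specialUnitaryGroup_iff] at hA
    obtain ⟨hAu, hAd⟩ := hA
    have hθ0 : θ ≠ 0 := by intro h; rw [h] at hθ; simp at hθ
    have hC : θ ^ 5 • (1 : Matrix (Fin 1) (Fin 1) ℂ) ∈ Matrix.unitaryGroup (Fin 1) ℂ :=
      smul_one_unitary _ (by rw [norm_pow, hθ]; norm_num)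
    have hD : θ⁻¹ • A ∈ Matrix.unitaryGroup (Fin 5) ℂ := by
      have : θ⁻¹ • A = (θ⁻¹ • (1 : Matrix (Fin 5) (Fin 5) ℂ)) * A := by
        rw [Matrix.smul_mul, Matrix.one_mul]
      rw [this]
      exact mul_mem (smul_one_unitary _ (by rw [norm_inv, hθ]; norm_num)) hAu
    refine ⟨Matrix.mem_specialUnitaryGroup_iff.mpr ⟨fromBlocks_unitary hC hD, ?_⟩,
      _, _, hC, hD, rfl⟩
    rw [h₅, det_fromBlocks_zero₂₁, Matrix.det_smul, Matrix.det_smul, hAd, det_one]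
    simp [Fintype.card_fin]
    field_simp
  · rintro M ⟨hMsu, C, D, hC, hD, rfl⟩
    rw [Matrix.mem_specialUnitaryGroup_iff] at hMsu
    have hdet : C.det * D.det = 1 := by
      have h2 := hMsu.2
      rwa [det_fromBlocks_zero₂₁] at h2
    set ζ := C 0 0 with hζdef
    have hCeq : C = ζ • (1 : Matrix (Fin 1) (Fin 1) ℂ) := by
      ext i j; fin_cases i; fin_cases j; simp [hζdef]
    have hζnorm : ‖ζ‖ = 1 := by
      have := Matrix.mem_unitaryGroup_iff.mp hC
      have h00 := congrFun (congrFun this 0) 0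
      simp [Matrix.mul_apply, Matrix.star_eq_conjTranspose, Matrix.conjTranspose_apply,
        Fin.sum_univ_one, Complex.mul_conj] at h00
      have : Complex.normSq ζ = 1 := by exact_mod_cast h00
      have := Complex.normSq_eq_norm_sq ζ ▸ this
      nlinarith [norm_nonneg ζ]
    obtain ⟨θ, hθ5⟩ := IsAlgClosed.exists_pow_nat_eq ζ (n := 5) (by norm_num)
    have hθnorm : ‖θ‖ = 1 := norm_eq_one_of_pow5 hθ5 hζnorm
    have hθ0 : θ ≠ 0 := by intro h; rw [h] at hθnorm; simp at hθnorm
    have hdetC : C.det = ζ := by rw [hCeq]; simp [Matrix.det_fin_one]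
    refine ⟨θ, θ • D, hθnorm, ?_, ?_⟩
    · rw [Matrix.mem_specialUnitaryGroup_iff]
      constructor
      · have : θ • D = (θ • (1 : Matrix (Fin 5) (Fin 5) ℂ)) * D := by
          rw [Matrix.smul_mul, Matrix.one_mul]
        rw [this]
        exact mul_mem (smul_one_unitary _ hθnorm) hD
      · rw [Matrix.det_smul]
        simp only [Fintype.card_fin]
        rw [hθ5, ← hdetC, hdet]
    · rw [h₅, hθ5, ← hCeq, smul_smul, inv_mul_cancel₀ hθ0, one_smul]
  · intro θ A hθ hA
    have hθ0 : θ ≠ 0 := by intro h; rw [h] at hθ; simp at hθ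
    constructor
    · intro h
      rw [h₅, ← Matrix.fromBlocks_one] at h
      have h11 := congrArg Matrix.toBlocks₁₁ h
      have h22 := congrArg Matrix.toBlocks₂₂ h
      simp only [Matrix.toBlocks_fromBlocks₁₁, Matrix.toBlocks_fromBlocks₂₂] at h11 h22
      have hθ5 : θ ^ 5 = 1 := by
        have := congrFun (congrFun h11 0) 0
        simpa using this
      refine ⟨hθ5, ?_⟩
      calc A = θ • (θ⁻¹ • A) := by rw [smul_smul, mul_inv_cancel₀ hθ0, one_smul]
        _ = θ • (1 : Matrix (Fin 5) (Fin 5) ℂ) := by rw [h22]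
    · rintro ⟨hθ5, rfl⟩
      rw [h₅, hθ5, one_smul, smul_smul, inv_mul_cancel₀ hθ0, one_smul,
        Matrix.fromBlocks_one]
end

section
/- Let δ₁ be the ℝ-linear map on the octonions determined on the standard basis by δ₁: 1↦1, e₁↦e₁, e₂↦e₄, e₃↦e₅, e₄↦e₂, e₅↦e₃, e₆↦-e₆, e₇↦-e₇. Then δ₁ is an algebra automorphism of the octonions with δ₁² = 1, and δ₁γ = γ_H δ₁, where γ is the automorphism fixing ℍ = span(1,e₁,e₂,e₃) and negating e₄,…,e₇, and γ_H fixes 1,e₁,e₄,e₅ and negates e₂,e₃,e₆,e₇. In particular γ and γ_H are conjugate in the automorphism group G₂ of the octonions. -/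
open scoped Quaternion

/-- The octonions, realized via the Cayley–Dickson construction as pairs of quaternions. -/
abbrev Oct : Type := ℍ[ℝ] × ℍ[ℝ]

/-- The Cayley multiplication on `𝕆 = ℍ ⊕ ℍ`. -/
noncomputable def omul (x y : Oct) : Oct :=
  (x.1 * y.1 - star y.2 * x.2, y.2 * x.1 + x.2 * star y.1)

/-- The standard basis `1, e₁, …, e₇` of the octonions:
`1 = (1,0)`, `e₁ = (i,0)`, `e₂ = (j,0)`, `e₃ = (k,0)`,
`e₄ = (0,1)`, `e₅ = (0,i)`, `e₆ = (0,j)`, `e₇ = (0,k)`. -/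
noncomputable def octE : Fin 8 → Oct
  | 0 => (⟨1, 0, 0, 0⟩, 0)
  | 1 => (⟨0, 1, 0, 0⟩, 0)
  | 2 => (⟨0, 0, 1, 0⟩, 0)
  | 3 => (⟨0, 0, 0, 1⟩, 0)
  | 4 => (0, ⟨1, 0, 0, 0⟩)
  | 5 => (0, ⟨0, 1, 0, 0⟩)
  | 6 => (0, ⟨0, 0, 1, 0⟩)
  | 7 => (0, ⟨0, 0, 0, 1⟩)

/-- `δ₁ : 1↦1, e₁↦e₁, e₂↦e₄, e₃↦e₅, e₄↦e₂, e₅↦e₃, e₆↦-e₆, e₇↦-e₇` (ℝ-linearly extended). -/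
def delta1 (x : Oct) : Oct :=
  (⟨x.1.re, x.1.imI, x.2.re, x.2.imI⟩, ⟨x.1.imJ, x.1.imK, -x.2.imJ, -x.2.imK⟩)

/-- `γ`: the automorphism fixing `ℍ = span(1,e₁,e₂,e₃)` and negating `e₄,…,e₇`. -/
def gammaOct (x : Oct) : Oct := (x.1, -x.2)

/-- `γ_H`: fixes `1, e₁, e₄, e₅` and negates `e₂, e₃, e₆, e₇`. -/
def gammaHOct (x : Oct) : Oct :=
  (⟨x.1.re, x.1.imI, -x.1.imJ, -x.1.imK⟩, ⟨x.2.re, x.2.imI, -x.2.imJ, -x.2.imK⟩)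

/-- A well-typed name for the quaternion with the given components. -/
def qQ (a b c d : ℝ) : ℍ[ℝ] := ⟨a, b, c, d⟩

theorem qQ_eq (a b c d : ℝ) : (⟨a, b, c, d⟩ : ℍ[ℝ]) = qQ a b c d := rfl

@[simp] theorem qQ_re (a b c d : ℝ) : (qQ a b c d).re = a := rfl

@[simp] theorem qQ_imI (a b c d : ℝ) : (qQ a b c d).imI = b := rfl

@[simp] theorem qQ_imJ (a b c d : ℝ) : (qQ a b c d).imJ = c := rfl

@[simp] theorem qQ_imK (a b c d : ℝ) : (qQ a b c d).imK = d := rfl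

/-- `δ₁` is an involutive algebra automorphism of the octonions with the stated values on the
standard basis, and `δ₁ γ = γ_H δ₁`; in particular `γ` and `γ_H` are conjugate in
`G₂ = Aut(𝕆)`. -/
theorem stmt13 :
    delta1 (octE 0) = octE 0 ∧ delta1 (octE 1) = octE 1 ∧
    delta1 (octE 2) = octE 4 ∧ delta1 (octE 3) = octE 5 ∧
    delta1 (octE 4) = octE 2 ∧ delta1 (octE 5) = octE 3 ∧
    delta1 (octE 6) = -octE 6 ∧ delta1 (octE 7) = -octE 7 ∧
    (∀ x y : Oct, delta1 (omul x y) = omul (delta1 x) (delta1 y)) ∧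
    (∀ x y : Oct, delta1 (x + y) = delta1 x + delta1 y) ∧
    (∀ (r : ℝ) (x : Oct), delta1 (r • x) = r • delta1 x) ∧
    (∀ x : Oct, delta1 (delta1 x) = x) ∧
    (∀ x : Oct, delta1 (gammaOct x) = gammaHOct (delta1 x)) := by
  refine ⟨?_, ?_, ?_, ?_, ?_, ?_, ?_, ?_, ?_, ?_, ?_, ?_, ?_⟩
  · simp [delta1, octE, Prod.ext_iff, Quaternion.ext_iff, qQ_eq, qQ_re, qQ_imI, qQ_imJ, qQ_imK]
  · simp [delta1, octE, Prod.ext_iff, Quaternion.ext_iff, qQ_eq, qQ_re, qQ_imI, qQ_imJ, qQ_imK]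
  · simp [delta1, octE, Prod.ext_iff, Quaternion.ext_iff, qQ_eq, qQ_re, qQ_imI, qQ_imJ, qQ_imK]
  · simp [delta1, octE, Prod.ext_iff, Quaternion.ext_iff, qQ_eq, qQ_re, qQ_imI, qQ_imJ, qQ_imK]
  · simp [delta1, octE, Prod.ext_iff, Quaternion.ext_iff, qQ_eq, qQ_re, qQ_imI, qQ_imJ, qQ_imK]
  · simp [delta1, octE, Prod.ext_iff, Quaternion.ext_iff, qQ_eq, qQ_re, qQ_imI, qQ_imJ, qQ_imK]
  · simp [delta1, octE, Prod.ext_iff, Quaternion.ext_iff, qQ_eq, qQ_re, qQ_imI, qQ_imJ, qQ_imK]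
  · simp [delta1, octE, Prod.ext_iff, Quaternion.ext_iff, qQ_eq, qQ_re, qQ_imI, qQ_imJ, qQ_imK]
  · intro x y
    obtain ⟨a, b⟩ := x; obtain ⟨c, d⟩ := y
    simp only [delta1, omul, Prod.ext_iff, Quaternion.ext_iff, qQ_eq, qQ_re, qQ_imI, qQ_imJ, qQ_imK, Quaternion.re_mul,
      Quaternion.imI_mul, Quaternion.imJ_mul, Quaternion.imK_mul, Quaternion.re_sub,
      Quaternion.imI_sub, Quaternion.imJ_sub, Quaternion.imK_sub, Quaternion.re_add,
      Quaternion.imI_add, Quaternion.imJ_add, Quaternion.imK_add, Quaternion.re_star,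
      Quaternion.imI_star, Quaternion.imJ_star, Quaternion.imK_star, neg_neg]
    refine ⟨⟨?_, ?_, ?_, ?_⟩, ?_, ?_, ?_, ?_⟩ <;> ring
  · intro x y
    obtain ⟨a, b⟩ := x; obtain ⟨c, d⟩ := y
    simp only [delta1, Prod.mk_add_mk, Prod.ext_iff, Quaternion.ext_iff, qQ_eq, qQ_re, qQ_imI, qQ_imJ, qQ_imK, Quaternion.re_add,
      Quaternion.imI_add, Quaternion.imJ_add, Quaternion.imK_add, neg_add]
    norm_num
  · intro r x
    obtain ⟨a, b⟩ := x
    simp only [delta1, Prod.smul_mk, Prod.ext_iff, Quaternion.ext_iff, qQ_eq, qQ_re, qQ_imI, qQ_imJ, qQ_imK, Quaternion.re_smul,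
      Quaternion.imI_smul, Quaternion.imJ_smul, Quaternion.imK_smul, smul_eq_mul, smul_neg,
      mul_neg, neg_neg]
    tauto
  · intro x
    obtain ⟨a, b⟩ := x
    simp only [delta1, Prod.ext_iff, Quaternion.ext_iff, qQ_eq, qQ_re, qQ_imI, qQ_imJ, qQ_imK, neg_neg]
    tauto
  · intro x
    obtain ⟨a, b⟩ := x
    simp only [delta1, gammaOct, gammaHOct, Prod.ext_iff, Quaternion.ext_iff, qQ_eq, qQ_re, qQ_imI, qQ_imJ, qQ_imK,
      Quaternion.re_neg, Quaternion.imI_neg, Quaternion.imJ_neg, Quaternion.imK_neg, neg_neg]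
end
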